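/- Let t ∈ ℤ[1/2] be such that the field E := ℚ(√−7, √−t) ⊆ ℂ has degree 4 over ℚ and contains none of √3, √−1, √−3 (i.e. no element of E squares to 3, −1, or −3). Let T be a finite subset of {odd primes} ∪ {4} and let N = ∏_{m ∈ T} m. Then there exists σ ∈ Gal(E(ζ_N)/E) such that σ(ζ_ℓ) ≠ ζ_ℓ for every ℓ ∈ T ∩ {3,4}. -/

import Mathlib

/-- The ring `ℤ[1/2]`, realized as the smallest subring of `ℚ` containing `1/2`. -/
def Zhalf : Subring ℚ := Subring.closure {(2 : ℚ)⁻¹}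

set_option synthInstance.maxHeartbeats 1000000 in
set_option maxHeartbeats 2000000 in
theorem stmt11 (t : ↥Zhalf)
    (z7 zt : ℂ) (hz7 : z7 ^ 2 = -7) (hzt : zt ^ 2 = -((t : ℚ) : ℂ))
    (E : IntermediateField ℚ ℂ) (hE : E = IntermediateField.adjoin ℚ {z7, zt})
    (hdeg : Module.finrank ℚ ↥E = 4)
    (h3 : ∀ w ∈ E, w ^ 2 ≠ 3) (hm1 : ∀ w ∈ E, w ^ 2 ≠ -1) (hm3 : ∀ w ∈ E, w ^ 2 ≠ -3)
    (T : Finset ℕ) (hT : ∀ ℓ ∈ T, (Nat.Prime ℓ ∧ ℓ ≠ 2) ∨ ℓ = 4)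
    (N : ℕ) (hN : N = ∏ m ∈ T, m)
    (ζ : ℂ) (hζ : IsPrimitiveRoot ζ N) :
    ∃ σ : (↥(IntermediateField.adjoin ↥E {ζ}) ≃ₐ[↥E] ↥(IntermediateField.adjoin ↥E {ζ})),
      ∀ ℓ ∈ T, (ℓ = 3 ∨ ℓ = 4) →
        ∀ h : ζ ^ (N / ℓ) ∈ IntermediateField.adjoin ↥E {ζ},
          ((σ ⟨ζ ^ (N / ℓ), h⟩ : ↥(IntermediateField.adjoin ↥E {ζ})) : ℂ) ≠ ζ ^ (N / ℓ) := by
  classical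
  set L : IntermediateField ↥E ℂ := IntermediateField.adjoin ↥E {ζ} with hLdef
  by_cases h34 : 3 ∈ T ∨ 4 ∈ T
  swap
  · refine ⟨AlgEquiv.refl, ?_⟩
    rintro ℓ hℓ (rfl | rfl) h _
    · exact h34 (Or.inl hℓ)
    · exact h34 (Or.inr hℓ)
  -- N is positive
  have hNpos : 0 < N := by
    rw [hN]
    apply Finset.prod_pos
    intro m hm
    rcases hT m hm with ⟨hp, _⟩ | rfl
    · exact hp.pos
    · norm_num
  -- set up the cyclotomic extension instances
  let Np : ℕ+ := ⟨N, hNpos⟩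
  have hζ' : IsPrimitiveRoot ζ ((Np : ℕ+) : ℕ) := hζ
  have hint : IsIntegral ↥E ζ := by
    refine ⟨Polynomial.X ^ N - Polynomial.C 1, Polynomial.monic_X_pow_sub_C 1 hNpos.ne', ?_⟩
    simp [hζ.pow_eq_one]
  have hsub : Algebra.adjoin ↥E ({ζ} : Set ℂ) = L.toSubalgebra :=
    (IntermediateField.adjoin_simple_toSubalgebra_of_isAlgebraic hint.isAlgebraic).symm
  haveI : IsCyclotomicExtension {(Np : ℕ)} ↥E ↥L :=
    IsCyclotomicExtension.equiv _ ↥E _ (Subalgebra.equivOfEq _ _ hsub)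
      (h := hζ'.adjoin_isCyclotomicExtension ↥E)
  haveI : FiniteDimensional ↥E ↥L := IsCyclotomicExtension.finiteDimensional {(Np : ℕ)} ↥E ↥L
  haveI : IsGalois ↥E ↥L := IsCyclotomicExtension.isGalois {(Np : ℕ)} ↥E ↥L
  have hζmem : ζ ∈ L := IntermediateField.subset_adjoin ↥E {ζ} rfl
  have hpowmem : ∀ k : ℕ, ζ ^ k ∈ L := fun k => pow_mem hζmem k
  -- fixed by all automorphisms implies in E
  have key : ∀ x : ↥L, (∀ σ : ↥L ≃ₐ[↥E] ↥L, σ x = x) → ∃ e : ↥E, ((e : ℂ)) = (x : ℂ) := by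
    intro x hx
    have hxmem : x ∈ IntermediateField.fixedField
        (IntermediateField.fixingSubgroup (⊥ : IntermediateField ↥E ↥L)) := by
      intro g
      exact hx g.1
    rw [IsGalois.fixedField_fixingSubgroup ⊥] at hxmem
    rw [IntermediateField.mem_bot] at hxmem
    obtain ⟨e, he⟩ := hxmem
    refine ⟨e, ?_⟩
    have : ((algebraMap ↥E ↥L e : ↥L) : ℂ) = (e : ℂ) := rfl
    rw [← he, this]
  -- a primitive root argument
  have move : ∀ ℓ, ℓ ∈ T → (ℓ = 3 ∨ ℓ = 4) → ∀ x : ↥L, ((x : ℂ) = ζ ^ (N / ℓ)) →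
      ∃ σ : ↥L ≃ₐ[↥E] ↥L, σ x ≠ x := by
    intro ℓ hℓT hℓ34 x hxval
    by_contra hcon
    push_neg at hcon
    obtain ⟨e, he⟩ := key x hcon
    have hdvd : ℓ ∣ N := hN ▸ Finset.dvd_prod_of_mem _ hℓT
    have hprim : IsPrimitiveRoot (ζ ^ (N / ℓ)) ℓ :=
      hζ.pow hNpos (Nat.div_mul_cancel hdvd).symm
    have heη : (e : ℂ) = ζ ^ (N / ℓ) := by rw [he, hxval]
    rcases hℓ34 with rfl | rfl
    · -- ℓ = 3 : cube root of unity, (2η+1)^2 = -3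
      have hpow : ((e : ℂ)) ^ 3 = 1 := by rw [heη]; exact hprim.pow_eq_one
      have hne1 : ((e : ℂ)) ≠ 1 := by rw [heη]; exact hprim.ne_one (by norm_num)
      have hquad : ((e : ℂ)) ^ 2 + (e : ℂ) + 1 = 0 := by
        have hfac : ((e : ℂ) - 1) * (((e : ℂ)) ^ 2 + (e : ℂ) + 1) = 0 := by
          linear_combination hpow
        rcases mul_eq_zero.1 hfac with h | h
        · exact (hne1 (sub_eq_zero.1 h)).elim
        · exact h
      refine hm3 ((e : ℂ) + (e : ℂ) + 1) ?_ (by linear_combination 4 * hquad)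
      exact E.add_mem (E.add_mem e.2 e.2) E.one_mem
    · -- ℓ = 4 : fourth root of unity, η^2 = -1
      have hpow : ((e : ℂ)) ^ 4 = 1 := by rw [heη]; exact hprim.pow_eq_one
      have hne : ((e : ℂ)) ^ 2 ≠ 1 := by
        rw [heη]
        exact hprim.pow_ne_one_of_pos_of_lt (by norm_num) (by norm_num)
      have hsq : ((e : ℂ)) ^ 2 = -1 := by
        have hfac : (((e : ℂ)) ^ 2 - 1) * (((e : ℂ)) ^ 2 + 1) = 0 := by
          linear_combination hpow
        rcases mul_eq_zero.1 hfac with h | h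
        · exact (hne (sub_eq_zero.1 h)).elim
        · linear_combination h
      exact hm1 (e : ℂ) e.2 hsq
  -- the two relevant elements
  set x3 : ↥L := ⟨ζ ^ (N / 3), hpowmem _⟩ with hx3def
  set x4 : ↥L := ⟨ζ ^ (N / 4), hpowmem _⟩ with hx4def
  have exσ : ∃ σ : ↥L ≃ₐ[↥E] ↥L, (3 ∈ T → σ x3 ≠ x3) ∧ (4 ∈ T → σ x4 ≠ x4) := by
    by_cases m3 : 3 ∈ T <;> by_cases m4 : 4 ∈ T
    · obtain ⟨a, ha⟩ := move 3 m3 (Or.inl rfl) x3 rfl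
      obtain ⟨b, hb⟩ := move 4 m4 (Or.inr rfl) x4 rfl
      by_cases hax4 : a x4 = x4
      · by_cases hbx3 : b x3 = x3
        · refine ⟨a.trans b, fun _ => ?_, fun _ => ?_⟩
          · intro hcontr
            apply ha
            have h1 : b (a x3) = x3 := hcontr
            calc a x3 = b.symm (b (a x3)) := (b.symm_apply_apply _).symm
              _ = b.symm x3 := by rw [h1]
              _ = b.symm (b x3) := by rw [hbx3]
              _ = x3 := b.symm_apply_apply _
          · show b (a x4) ≠ x4
            rw [hax4]; exact hb
        · exact ⟨b, fun _ => hbx3, fun _ => hb⟩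
      · exact ⟨a, fun _ => ha, fun _ => hax4⟩
    · obtain ⟨a, ha⟩ := move 3 m3 (Or.inl rfl) x3 rfl
      exact ⟨a, fun _ => ha, fun h => absurd h m4⟩
    · obtain ⟨b, hb⟩ := move 4 m4 (Or.inr rfl) x4 rfl
      exact ⟨b, fun h => absurd h m3, fun _ => hb⟩
    · exact absurd h34 (by simp [m3, m4])
  obtain ⟨σ, hσ3, hσ4⟩ := exσ
  refine ⟨σ, ?_⟩
  rintro ℓ hℓ (rfl | rfl) h heq
  · exact hσ3 hℓ (Subtype.ext heq)
  · exact hσ4 hℓ (Subtype.ext heq)
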